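/- arXiv:1108.0597 — 3 statements merged into one kernel-verified Lean document; each statement's English description precedes it below -/
import Mathlib

section
/- Let α, σ, L > 0, set R = L/(2π), β = (α − σR³)/R², and for an integer k ≥ 2 define the second-order energy coefficient c_k = σ + k²β/R + α(2k⁴ − 5k² + 2)/R³. Then c_k < 0 if and only if γ := σL³/α > 16π³(k² − 1). -/
open Real

/-- The coefficient `c_k = σ + k²β/R + α(2k⁴ − 5k² + 2)/R³` of the second-order term in the
energy of a radially perturbed circular disk (mode `k ≥ 2`) is negative if and only if
`γ = σL³/α > 16π³(k² − 1)`. Here `R = L/(2π)` and `β = (α − σR³)/R²`. -/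
theorem euler_plateau_mode_instability
    (α σ L : ℝ) (hα : 0 < α) (hσ : 0 < σ) (hL : 0 < L)
    (R β : ℝ) (hR : R = L / (2 * π)) (hβ : β = (α - σ * R ^ 3) / R ^ 2)
    (k : ℕ) (hk : 2 ≤ k)
    (c : ℝ)
    (hc : c = σ + (k : ℝ) ^ 2 * β / R + α * (2 * (k : ℝ) ^ 4 - 5 * (k : ℝ) ^ 2 + 2) / R ^ 3) :
    c < 0 ↔ σ * L ^ 3 / α > 16 * π ^ 3 * ((k : ℝ) ^ 2 - 1) := by
  have hπ : (0:ℝ) < π := pi_pos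
  have hR0 : 0 < R := by rw [hR]; positivity
  have hk1 : (1:ℝ) < (k:ℝ)^2 := by
    have : (2:ℝ) ≤ (k:ℝ) := by exact_mod_cast hk
    nlinarith
  have hkm : 0 < (k:ℝ)^2 - 1 := by linarith
  have hc' : c = ((k:ℝ)^2 - 1) * (2 * α * ((k:ℝ)^2 - 1) - σ * R^3) / R^3 := by
    rw [hc, hβ]; field_simp; ring
  have hL' : L = 2 * π * R := by rw [hR]; field_simp
  constructor
  · intro h
    rw [hc'] at h
    have h2 : ((k:ℝ)^2 - 1) * (2 * α * ((k:ℝ)^2 - 1) - σ * R^3) < 0 := by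
      have := (div_neg_iff).mp h
      rcases this with ⟨_, h3⟩ | ⟨h3, _⟩
      · nlinarith [pow_pos hR0 3]
      · exact h3
    have h4 : 2 * α * ((k:ℝ)^2 - 1) < σ * R^3 := by nlinarith
    rw [gt_iff_lt, lt_div_iff₀ hα, hL']
    nlinarith [pow_pos hπ 3]
  · intro h
    rw [gt_iff_lt, lt_div_iff₀ hα, hL'] at h
    have h4 : 2 * α * ((k:ℝ)^2 - 1) < σ * R^3 := by nlinarith [pow_pos hπ 3]
    rw [hc']
    apply div_neg_of_neg_of_pos _ (pow_pos hR0 3)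
    nlinarith
end

section
/- For the closed curve c(φ) = (R(1+t²)cos φ, R(1−t²)sin φ, tR sin 2φ), φ ∈ [0,2π], the total length satisfies L(t) = ∮ |c'(φ)| dφ = πR(2 + 2t² − t⁴) + O(t⁶) as t → 0. -/
open Real Asymptotics Filter

/-- Boundary curve `c(φ) = (R(1+t²)cos φ, R(1−t²)sin φ, tR sin 2φ)` of the trial surface. -/
noncomputable def bcurve (R t φ : ℝ) : ℝ × ℝ × ℝ :=
  (R * (1 + t ^ 2) * cos φ, R * (1 - t ^ 2) * sin φ, t * R * sin (2 * φ))

/-- Euclidean dot product on `ℝ³ = ℝ × ℝ × ℝ`. -/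
noncomputable def dot (a b : ℝ × ℝ × ℝ) : ℝ :=
  a.1 * b.1 + a.2.1 * b.2.1 + a.2.2 * b.2.2

/-- Length of the boundary curve as a function of the shape parameter `t`. -/
noncomputable def blength (R t : ℝ) : ℝ :=
  ∫ φ in (0 : ℝ)..(2 * π), Real.sqrt (dot (deriv (bcurve R t) φ) (deriv (bcurve R t) φ))

lemma hasDerivAt_bcurve (R t φ : ℝ) :
    HasDerivAt (bcurve R t)
      (-(R * (1 + t ^ 2) * sin φ), R * (1 - t ^ 2) * cos φ, 2 * (t * R) * cos (2 * φ)) φ := by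
  have h1 : HasDerivAt (fun φ : ℝ => R * (1 + t ^ 2) * cos φ) (-(R * (1 + t ^ 2) * sin φ)) φ := by
    simpa [mul_comm] using (Real.hasDerivAt_cos φ).const_mul (R * (1 + t ^ 2))
  have h2 : HasDerivAt (fun φ : ℝ => R * (1 - t ^ 2) * sin φ) (R * (1 - t ^ 2) * cos φ) φ := by
    simpa [mul_comm] using (Real.hasDerivAt_sin φ).const_mul (R * (1 - t ^ 2))
  have h0 : HasDerivAt (fun φ : ℝ => sin (2 * φ)) (2 * cos (2 * φ)) φ := by
    have h := (Real.hasDerivAt_sin (2 * φ)).comp φ ((hasDerivAt_id φ).const_mul 2)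
    have h' : HasDerivAt (fun φ : ℝ => sin (2 * φ)) (cos (2*φ) * (2*1)) φ := h
    simpa [mul_comm] using h'
  have h3 : HasDerivAt (fun φ : ℝ => t * R * sin (2 * φ)) (2 * (t * R) * cos (2 * φ)) φ := by
    have := h0.const_mul (t * R)
    rw [show (2 * (t * R) * cos (2 * φ)) = t * R * (2 * cos (2 * φ)) by ring]; exact this
  exact (h1.prodMk (h2.prodMk h3))

/-- `u φ = cos 4φ - cos 2φ` -/
noncomputable def uu (φ : ℝ) : ℝ := cos (4 * φ) - cos (2 * φ)

lemma dot_deriv (R t φ : ℝ) :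
    dot (deriv (bcurve R t) φ) (deriv (bcurve R t) φ)
      = R ^ 2 * ((1 + t ^ 2) ^ 2 + 2 * t ^ 2 * uu φ) := by
  rw [(hasDerivAt_bcurve R t φ).deriv]
  have h1 := sin_sq_add_cos_sq φ
  have h2 : cos (2 * φ) = 2 * cos φ ^ 2 - 1 := cos_two_mul φ
  have h3 : cos (4 * φ) = 2 * cos (2 * φ) ^ 2 - 1 := by
    have := cos_two_mul (2 * φ); rw [show (2:ℝ) * (2 * φ) = 4 * φ by ring] at this; exact this
  simp only [dot, uu]
  rw [h3, h2]
  linear_combination (R^2*(1+t^2)^2) * h1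

lemma sqrt_taylor {z : ℝ} (hz : |z| ≤ 1/2) :
    |Real.sqrt (1 + z) - (1 + z / 2 - z ^ 2 / 8)| ≤ |z| ^ 3 := by
  have hz1 : -(1/2) ≤ z := neg_le_of_abs_le hz
  have hz2 : z ≤ 1/2 := le_of_abs_le hz
  have hzsq : z ^ 2 ≤ 1/4 := by nlinarith
  have hpos : (0:ℝ) ≤ 1 + z := by linarith
  set c := |z| ^ 3 with hcdef
  have hc0 : 0 ≤ c := by positivity
  have hc1 : z ^ 3 ≤ c := by rw [hcdef, ← abs_pow]; exact le_abs_self _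
  have hc2 : -c ≤ z ^ 3 := by rw [hcdef, ← abs_pow]; exact neg_abs_le _
  have hc3 : c ≤ 1/8 := by
    rw [hcdef]
    calc |z| ^ 3 ≤ (1/2) ^ 3 := pow_le_pow_left₀ (abs_nonneg z) hz 3
    _ = 1/8 := by norm_num
  have hz4 : z ^ 4 ≤ c / 2 := by
    have h4 : z ^ 4 = |z| * |z| ^ 3 := by
      rw [show |z| * |z| ^ 3 = |z| ^ 4 by ring, ← abs_pow, abs_of_nonneg (by positivity : (0:ℝ) ≤ z ^ 4)]
    rw [h4, hcdef]
    nlinarith [abs_nonneg z, pow_nonneg (abs_nonneg z) 3]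
  rw [abs_le]
  constructor
  · have : (1 + z / 2 - z ^ 2 / 8 - c) ^ 2 ≤ 1 + z := by nlinarith
    have h := Real.le_sqrt_of_sq_le this
    linarith
  · have hnn : 0 ≤ 1 + z / 2 - z ^ 2 / 8 + c := by nlinarith
    have : Real.sqrt (1 + z) ≤ 1 + z / 2 - z ^ 2 / 8 + c := by
      rw [Real.sqrt_le_left hnn]
      nlinarith
    linarith

/-- fourth-order approximation of `√((1+t²)² + 2t²u)` -/
noncomputable def gg (t φ : ℝ) : ℝ :=
  (1 + t ^ 2) + t ^ 2 * uu φ / (1 + t ^ 2) - t ^ 4 * (uu φ) ^ 2 / (2 * (1 + t ^ 2) ^ 3)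

lemma abs_uu_le (φ : ℝ) : |uu φ| ≤ 2 := by
  have h1 := abs_cos_le_one (4 * φ)
  have h2 := abs_cos_le_one (2 * φ)
  calc |uu φ| ≤ |cos (4 * φ)| + |cos (2 * φ)| := abs_sub _ _
  _ ≤ 2 := by linarith

lemma pointwise_bound {t : ℝ} (φ : ℝ) (ht : |t| ≤ 1/4) :
    |Real.sqrt ((1 + t ^ 2) ^ 2 + 2 * t ^ 2 * uu φ) - gg t φ| ≤ 68 * t ^ 6 := by
  have ht2 : t ^ 2 ≤ 1/16 := by
    have := sq_abs t
    nlinarith [abs_nonneg t]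
  have hs1 : (1:ℝ) ≤ 1 + t ^ 2 := by nlinarith [sq_nonneg t]
  have hs0 : (0:ℝ) < 1 + t ^ 2 := by linarith
  have hs2 : 1 + t ^ 2 ≤ 17/16 := by linarith
  set s : ℝ := 1 + t ^ 2 with hsdef
  set z : ℝ := 2 * t ^ 2 * uu φ / s ^ 2 with hzdef
  have hu := abs_uu_le φ
  have hz : |z| ≤ 4 * t ^ 2 := by
    rw [hzdef, abs_div, abs_of_nonneg (sq_nonneg s)]
    rw [div_le_iff₀ (by positivity)]
    have h1 : |2 * t ^ 2 * uu φ| = 2 * t ^ 2 * |uu φ| := by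
      rw [abs_mul, abs_of_nonneg (by positivity : (0:ℝ) ≤ 2 * t ^ 2)]
    rw [h1]
    have hss : (1:ℝ) ≤ s ^ 2 := by nlinarith
    nlinarith [sq_nonneg t]
  have hz12 : |z| ≤ 1/2 := by nlinarith
  have hA : (1 + t ^ 2) ^ 2 + 2 * t ^ 2 * uu φ = s ^ 2 * (1 + z) := by
    rw [hzdef, hsdef]; field_simp
  have hsqrt : Real.sqrt ((1 + t ^ 2) ^ 2 + 2 * t ^ 2 * uu φ) = s * Real.sqrt (1 + z) := by
    rw [hA, Real.sqrt_mul (sq_nonneg s), Real.sqrt_sq hs0.le]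
  have hgg : gg t φ = s * (1 + z / 2 - z ^ 2 / 8) := by
    rw [gg, hzdef, hsdef]; field_simp; ring
  rw [hsqrt, hgg, ← mul_sub, abs_mul, abs_of_pos hs0]
  have h1 := sqrt_taylor hz12
  have h2 : |z| ^ 3 ≤ 64 * t ^ 6 := by
    calc |z| ^ 3 ≤ (4 * t ^ 2) ^ 3 := pow_le_pow_left₀ (abs_nonneg z) hz 3
    _ = 64 * t ^ 6 := by ring
  calc s * |Real.sqrt (1 + z) - (1 + z / 2 - z ^ 2 / 8)| ≤ (17/16) * (64 * t ^ 6) := by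
        apply mul_le_mul hs2 (h1.trans h2) (abs_nonneg _) (by norm_num)
  _ ≤ 68 * t ^ 6 := by nlinarith [pow_nonneg (sq_nonneg t) 3]

lemma uu_sq (φ : ℝ) : (uu φ) ^ 2
    = 1 + cos (8 * φ) / 2 + cos (4 * φ) / 2 - cos (6 * φ) - cos (2 * φ) := by
  have h8 : cos (8 * φ) = 2 * cos (4 * φ) ^ 2 - 1 := by
    have := cos_two_mul (4 * φ); rw [show (2:ℝ) * (4 * φ) = 8 * φ by ring] at this; exact this
  have h4 : cos (4 * φ) = 2 * cos (2 * φ) ^ 2 - 1 := by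
    have := cos_two_mul (2 * φ); rw [show (2:ℝ) * (2 * φ) = 4 * φ by ring] at this; exact this
  have h6 : cos (6 * φ) = cos (4 * φ) * cos (2 * φ) - sin (4 * φ) * sin (2 * φ) := by
    have := cos_add (4 * φ) (2 * φ); rw [show (4:ℝ) * φ + 2 * φ = 6 * φ by ring] at this; exact this
  have h2 : cos (2 * φ) = cos (4 * φ) * cos (2 * φ) + sin (4 * φ) * sin (2 * φ) := by
    have := cos_sub (4 * φ) (2 * φ); rw [show (4:ℝ) * φ - 2 * φ = 2 * φ by ring] at this; exact this
  unfold uu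
  linear_combination -h8 / 2 - h4 / 2 + h6 + h2

lemma hasDerivAt_sin_mul (k φ : ℝ) :
    HasDerivAt (fun φ : ℝ => sin (k * φ)) (k * cos (k * φ)) φ := by
  have h := (Real.hasDerivAt_sin (k * φ)).comp φ ((hasDerivAt_id φ).const_mul k)
  have h' : HasDerivAt (fun φ : ℝ => sin (k * φ)) (cos (k * φ) * (k * 1)) φ := h
  simpa [mul_comm] using h'

/-- antiderivative of `gg t ·` -/
noncomputable def GG (t φ : ℝ) : ℝ :=
  (1 + t ^ 2) * φ + t ^ 2 / (1 + t ^ 2) * (sin (4 * φ) / 4 - sin (2 * φ) / 2)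
    - t ^ 4 / (2 * (1 + t ^ 2) ^ 3)
        * (φ + sin (8 * φ) / 16 + sin (4 * φ) / 8 - sin (6 * φ) / 6 - sin (2 * φ) / 2)

lemma hasDerivAt_GG (t φ : ℝ) : HasDerivAt (GG t) (gg t φ) φ := by
  have h2 := hasDerivAt_sin_mul 2 φ
  have h4 := hasDerivAt_sin_mul 4 φ
  have h6 := hasDerivAt_sin_mul 6 φ
  have h8 := hasDerivAt_sin_mul 8 φ
  have hid : HasDerivAt (fun φ : ℝ => φ) 1 φ := hasDerivAt_id φ
  have H : HasDerivAt (GG t)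
      ((1 + t ^ 2) * 1
        + t ^ 2 / (1 + t ^ 2) * (4 * cos (4 * φ) / 4 - 2 * cos (2 * φ) / 2)
        - t ^ 4 / (2 * (1 + t ^ 2) ^ 3)
            * (1 + 8 * cos (8 * φ) / 16 + 4 * cos (4 * φ) / 8 - 6 * cos (6 * φ) / 6
                - 2 * cos (2 * φ) / 2)) φ := by
    unfold GG
    exact ((hid.const_mul _).add
      (((h4.div_const 4).sub (h2.div_const 2)).const_mul _)).sub
      ((((((hid.add (h8.div_const 16)).add (h4.div_const 8)).sub
        (h6.div_const 6)).sub (h2.div_const 2)).const_mul _))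
  convert H using 1
  unfold gg
  rw [uu_sq]
  unfold uu
  ring

@[continuity, fun_prop]
lemma continuous_uu : Continuous uu := by unfold uu; continuity

lemma continuous_gg (t : ℝ) : Continuous (gg t) := by unfold gg; continuity

lemma sin_mul_two_pi (n : ℕ) : sin ((n : ℝ) * (2 * π)) = 0 := by
  rw [show (n:ℝ) * (2 * π) = (2 * n : ℕ) * π by push_cast; ring]
  exact Real.sin_nat_mul_pi _

lemma integral_gg (t : ℝ) :
    (∫ φ in (0:ℝ)..(2 * π), gg t φ)
      = 2 * π * (1 + t ^ 2) - π * t ^ 4 / (1 + t ^ 2) ^ 3 := by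
  rw [intervalIntegral.integral_eq_sub_of_hasDerivAt (fun φ _ => hasDerivAt_GG t φ)
    ((continuous_gg t).intervalIntegrable _ _)]
  have s2 : sin (2 * (2 * π)) = 0 := by simpa using sin_mul_two_pi 2
  have s4 : sin (4 * (2 * π)) = 0 := by simpa using sin_mul_two_pi 4
  have s6 : sin (6 * (2 * π)) = 0 := by simpa using sin_mul_two_pi 6
  have s8 : sin (8 * (2 * π)) = 0 := by simpa using sin_mul_two_pi 8
  unfold GG
  simp only [mul_zero, Real.sin_zero, s2, s4, s6, s8]
  have h : (1 + t ^ 2 : ℝ) ≠ 0 := by positivity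
  field_simp
  ring

lemma blength_eq (R t : ℝ) (hR : 0 < R) :
    blength R t = ∫ φ in (0:ℝ)..(2 * π),
      R * Real.sqrt ((1 + t ^ 2) ^ 2 + 2 * t ^ 2 * uu φ) := by
  unfold blength
  have key : ∀ φ : ℝ, Real.sqrt (dot (deriv (bcurve R t) φ) (deriv (bcurve R t) φ))
      = R * Real.sqrt ((1 + t ^ 2) ^ 2 + 2 * t ^ 2 * uu φ) := by
    intro φ
    rw [dot_deriv, Real.sqrt_mul (sq_nonneg R), Real.sqrt_sq hR.le]
  simp only [key]

/-- The total length of the boundary curve of the trial surface satisfies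
`L(t) = πR(2 + 2t² − t⁴) + O(t⁶)` as `t → 0`. -/
theorem euler_plateau_boundary_length_expansion (R : ℝ) (hR : 0 < R) :
    (fun t => blength R t - π * R * (2 + 2 * t ^ 2 - t ^ 4)) =O[nhds 0] fun t => t ^ 6 := by
  rw [Asymptotics.isBigO_iff]
  refine ⟨140 * π * R, ?_⟩
  have hball : Metric.ball (0:ℝ) (1/4) ∈ nhds 0 := Metric.ball_mem_nhds _ (by norm_num)
  filter_upwards [hball] with t htb
  have ht : |t| ≤ 1/4 := by
    have := htb
    rw [Metric.mem_ball, Real.dist_eq, sub_zero] at this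
    linarith
  have ht2 : t ^ 2 ≤ 1/16 := by
    have := sq_abs t
    nlinarith [abs_nonneg t]
  have hs1 : (1:ℝ) ≤ 1 + t ^ 2 := by nlinarith [sq_nonneg t]
  have ht6 : (0:ℝ) ≤ t ^ 6 := by positivity
  -- continuity of integrands
  have hcontf : Continuous (fun φ : ℝ => R * Real.sqrt ((1 + t ^ 2) ^ 2 + 2 * t ^ 2 * uu φ)) := by
    apply continuous_const.mul
    exact Real.continuous_sqrt.comp (by continuity)
  have hcontg : Continuous (fun φ : ℝ => R * gg t φ) := continuous_const.mul (continuous_gg t)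
  -- split the difference
  have hsub : blength R t - R * (2 * π * (1 + t ^ 2) - π * t ^ 4 / (1 + t ^ 2) ^ 3)
      = ∫ φ in (0:ℝ)..(2 * π),
          (R * Real.sqrt ((1 + t ^ 2) ^ 2 + 2 * t ^ 2 * uu φ) - R * gg t φ) := by
    rw [intervalIntegral.integral_sub (hcontf.intervalIntegrable _ _)
      (hcontg.intervalIntegrable _ _), blength_eq R t hR,
      intervalIntegral.integral_const_mul, intervalIntegral.integral_const_mul, integral_gg]
  -- bound the integral term
  have hI : |blength R t - R * (2 * π * (1 + t ^ 2) - π * t ^ 4 / (1 + t ^ 2) ^ 3)|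
      ≤ R * (68 * t ^ 6) * |2 * π - 0| := by
    rw [hsub, ← Real.norm_eq_abs]
    apply intervalIntegral.norm_integral_le_of_norm_le_const
    intro φ _
    rw [Real.norm_eq_abs, ← mul_sub, abs_mul, abs_of_pos hR]
    exact mul_le_mul_of_nonneg_left (pointwise_bound φ ht) hR.le
  -- bound the polynomial remainder
  have hs3 : (1:ℝ) ≤ (1 + t ^ 2) ^ 3 := by nlinarith [sq_nonneg t, sq_nonneg (t^2), sq_nonneg (t^3)]
  have hs3' : (0:ℝ) < (1 + t ^ 2) ^ 3 := by positivity
  have hpi := Real.pi_pos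
  have hC : |R * (2 * π * (1 + t ^ 2) - π * t ^ 4 / (1 + t ^ 2) ^ 3)
      - π * R * (2 + 2 * t ^ 2 - t ^ 4)| ≤ 4 * π * R * t ^ 6 := by
    have key : R * (2 * π * (1 + t ^ 2) - π * t ^ 4 / (1 + t ^ 2) ^ 3)
        - π * R * (2 + 2 * t ^ 2 - t ^ 4)
        = π * R * t ^ 6 * (3 + 3 * t ^ 2 + t ^ 4) / (1 + t ^ 2) ^ 3 := by
      field_simp
      ring
    rw [key, abs_of_nonneg (by positivity)]
    rw [div_le_iff₀ hs3']
    have h2 : 3 + 3 * t ^ 2 + t ^ 4 ≤ 4 := by nlinarith [sq_nonneg t, sq_nonneg (t^2)]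
    have h3 : π * R * t ^ 6 * (3 + 3 * t ^ 2 + t ^ 4) ≤ π * R * t ^ 6 * 4 :=
      mul_le_mul_of_nonneg_left h2 (by positivity)
    calc π * R * t ^ 6 * (3 + 3 * t ^ 2 + t ^ 4) ≤ π * R * t ^ 6 * 4 := h3
    _ ≤ 4 * π * R * t ^ 6 * (1 + t ^ 2) ^ 3 := by nlinarith [mul_pos (mul_pos hpi hR) (lt_of_lt_of_le one_pos hs3), mul_nonneg (mul_nonneg hpi.le hR.le) ht6]
  -- combine
  rw [Real.norm_eq_abs, Real.norm_eq_abs, abs_of_nonneg ht6]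
  have habs2pi : |2 * π - 0| = 2 * π := by rw [sub_zero, abs_of_pos (by positivity)]
  rw [habs2pi] at hI
  calc |blength R t - π * R * (2 + 2 * t ^ 2 - t ^ 4)|
      ≤ |blength R t - R * (2 * π * (1 + t ^ 2) - π * t ^ 4 / (1 + t ^ 2) ^ 3)|
        + |R * (2 * π * (1 + t ^ 2) - π * t ^ 4 / (1 + t ^ 2) ^ 3)
            - π * R * (2 + 2 * t ^ 2 - t ^ 4)| := by
        apply abs_sub_le
  _ ≤ R * (68 * t ^ 6) * (2 * π) + 4 * π * R * t ^ 6 := add_le_add hI hC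
  _ ≤ 140 * π * R * t ^ 6 := by nlinarith [mul_nonneg (mul_nonneg hpi.le hR.le) ht6]
end

section
/- For the curve c(φ) = (R(1+t²)cos φ, R(1−t²)sin φ, tR sin 2φ), the squared curvature satisfies κ(φ)² = [1 + t²(10 − 6cos 4φ) − t⁴(2 − 6cos 2φ − 2cos 6φ) + t⁶(10 − 6cos 4φ) + t⁸] / (R²[(1+t²)² − 2t²(cos 2φ − cos 4φ)]³). -/
open Real

/-- Cross product on `ℝ³ = ℝ × ℝ × ℝ`. -/
noncomputable def cross (a b : ℝ × ℝ × ℝ) : ℝ × ℝ × ℝ :=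
  (a.2.1 * b.2.2 - a.2.2 * b.2.1, a.2.2 * b.1 - a.1 * b.2.2, a.1 * b.2.1 - a.2.1 * b.1)

lemma bc_hd1 (R t φ : ℝ) :
    HasDerivAt (bcurve R t)
      (-(R * (1 + t ^ 2) * sin φ), R * (1 - t ^ 2) * cos φ, 2 * t * R * cos (2 * φ)) φ := by
  have hlin : HasDerivAt (fun x : ℝ => 2 * x) 2 φ := by
    simpa using (hasDerivAt_id φ).const_mul (2 : ℝ)
  have h1 : HasDerivAt (fun x : ℝ => R * (1 + t ^ 2) * cos x) (-(R * (1 + t ^ 2) * sin φ)) φ := by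
    have := (Real.hasDerivAt_cos φ).const_mul (R * (1 + t ^ 2))
    exact this.congr_deriv (by ring)
  have h2 : HasDerivAt (fun x : ℝ => R * (1 - t ^ 2) * sin x) (R * (1 - t ^ 2) * cos φ) φ := by
    have := (Real.hasDerivAt_sin φ).const_mul (R * (1 - t ^ 2))
    exact this.congr_deriv (by ring)
  have h3 : HasDerivAt (fun x : ℝ => t * R * sin (2 * x)) (2 * t * R * cos (2 * φ)) φ := by
    have := ((Real.hasDerivAt_sin (2 * φ)).comp φ hlin).const_mul (t * R)
    exact this.congr_deriv (by ring)
  exact h1.prodMk (h2.prodMk h3)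

lemma bc_hd2 (R t φ : ℝ) :
    HasDerivAt (fun x => (-(R * (1 + t ^ 2) * sin x), R * (1 - t ^ 2) * cos x,
        2 * t * R * cos (2 * x)) : ℝ → ℝ × ℝ × ℝ)
      (-(R * (1 + t ^ 2) * cos φ), -(R * (1 - t ^ 2) * sin φ), -(4 * t * R * sin (2 * φ))) φ := by
  have hlin : HasDerivAt (fun x : ℝ => 2 * x) 2 φ := by
    simpa using (hasDerivAt_id φ).const_mul (2 : ℝ)
  have h1 : HasDerivAt (fun x : ℝ => -(R * (1 + t ^ 2) * sin x)) (-(R * (1 + t ^ 2) * cos φ)) φ := by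
    have := ((Real.hasDerivAt_sin φ).const_mul (R * (1 + t ^ 2))).neg
    exact this.congr_deriv (by ring)
  have h2 : HasDerivAt (fun x : ℝ => R * (1 - t ^ 2) * cos x) (-(R * (1 - t ^ 2) * sin φ)) φ := by
    have := (Real.hasDerivAt_cos φ).const_mul (R * (1 - t ^ 2))
    exact this.congr_deriv (by ring)
  have h3 : HasDerivAt (fun x : ℝ => 2 * t * R * cos (2 * x)) (-(4 * t * R * sin (2 * φ))) φ := by
    have := ((Real.hasDerivAt_cos (2 * φ)).comp φ hlin).const_mul (2 * t * R)
    exact this.congr_deriv (by ring)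
  exact h1.prodMk (h2.prodMk h3)

/-- The squared curvature `κ² = |c' × c''|²/|c'|⁶` of the boundary curve equals the explicit
rational-trigonometric expression from the paper. -/
theorem euler_plateau_boundary_curvature_squared
    (R t : ℝ) (hR : 0 < R) (ht : |t| < 1) (φ : ℝ) :
    dot (cross (deriv (bcurve R t) φ) (deriv (deriv (bcurve R t)) φ))
        (cross (deriv (bcurve R t) φ) (deriv (deriv (bcurve R t)) φ))
      / dot (deriv (bcurve R t) φ) (deriv (bcurve R t) φ) ^ 3
      = (1 + t ^ 2 * (10 - 6 * cos (4 * φ)) - t ^ 4 * (2 - 6 * cos (2 * φ) - 2 * cos (6 * φ))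
          + t ^ 6 * (10 - 6 * cos (4 * φ)) + t ^ 8)
        / (R ^ 2 * ((1 + t ^ 2) ^ 2 - 2 * t ^ 2 * (cos (2 * φ) - cos (4 * φ))) ^ 3) := by
  have e1 : deriv (bcurve R t) = fun x =>
      (-(R * (1 + t ^ 2) * sin x), R * (1 - t ^ 2) * cos x, 2 * t * R * cos (2 * x)) :=
    funext fun x => (bc_hd1 R t x).deriv
  have e2 : deriv (deriv (bcurve R t)) φ
      = (-(R * (1 + t ^ 2) * cos φ), -(R * (1 - t ^ 2) * sin φ), -(4 * t * R * sin (2 * φ))) := by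
    rw [e1]; exact (bc_hd2 R t φ).deriv
  have hc : sin φ ^ 2 + cos φ ^ 2 = 1 := sin_sq_add_cos_sq φ
  have habs := abs_lt.mp ht
  have h1mt2 : 0 < 1 - t ^ 2 := by nlinarith [habs.1, habs.2]
  have hb : (0:ℝ) < -(R * (1 + t ^ 2) * sin φ) * -(R * (1 + t ^ 2) * sin φ) +
      R * (1 - t ^ 2) * cos φ * (R * (1 - t ^ 2) * cos φ) +
      2 * t * R * (2 * cos φ ^ 2 - 1) * (2 * t * R * (2 * cos φ ^ 2 - 1)) := by
    nlinarith [pow_pos (mul_pos hR h1mt2) 2, sq_nonneg (2 * (R * t * sin φ)),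
      sq_nonneg (2 * t * R * (2 * cos φ ^ 2 - 1)), hc]
  have hb3 : (-(R * (1 + t ^ 2) * sin φ) * -(R * (1 + t ^ 2) * sin φ) +
      R * (1 - t ^ 2) * cos φ * (R * (1 - t ^ 2) * cos φ) +
      2 * t * R * (2 * cos φ ^ 2 - 1) * (2 * t * R * (2 * cos φ ^ 2 - 1))) ^ 3 ≠ 0 :=
    pow_ne_zero 3 (ne_of_gt hb)
  have hX : (0:ℝ) < (1 + t ^ 2) ^ 2 -
      2 * t ^ 2 * (2 * cos φ ^ 2 - 1 - (2 * (2 * cos φ ^ 2 - 1) ^ 2 - 1)) := by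
    nlinarith [sq_nonneg (t * sin φ), sq_nonneg (t * (2 * cos φ ^ 2 - 1)),
      pow_pos h1mt2 2, sq_nonneg t, hc]
  have hX3 : R ^ 2 * ((1 + t ^ 2) ^ 2 -
      2 * t ^ 2 * (2 * cos φ ^ 2 - 1 - (2 * (2 * cos φ ^ 2 - 1) ^ 2 - 1))) ^ 3 ≠ 0 :=
    ne_of_gt (mul_pos (pow_pos hR 2) (pow_pos hX 3))
  rw [e2, e1]
  simp only [dot, cross]
  rw [show (6:ℝ) * φ = 2 * (3 * φ) by ring, show (4:ℝ) * φ = 2 * (2 * φ) by ring]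
  simp only [cos_two_mul, sin_two_mul, cos_three_mul]
  rw [div_eq_div_iff hb3 hX3]
  linear_combination ((64) * t ^ 6 * R ^ 6 + (256) * t ^ 8 * R ^ 6 - (640) * t ^ 10 * R ^ 6 + (256) * t ^ 12 * R ^ 6 + (64) * t ^ 14 * R ^ 6 - (4) * (cos φ) ^ 2 * t ^ 2 * R ^ 6 - (32) * (cos φ) ^ 2 * t ^ 4 * R ^ 6 - (1200) * (cos φ) ^ 2 * t ^ 6 * R ^ 6 - (2528) * (cos φ) ^ 2 * t ^ 8 * R ^ 6 + (8552) * (cos φ) ^ 2 * t ^ 10 * R ^ 6 - (2528) * (cos φ) ^ 2 * t ^ 12 * R ^ 6 - (1200) * (cos φ) ^ 2 * t ^ 14 * R ^ 6 - (32) * (cos φ) ^ 2 * t ^ 16 * R ^ 6 - (4) * (cos φ) ^ 2 * t ^ 18 * R ^ 6 - (1) * (cos φ) ^ 4 * R ^ 6 + (6) * (cos φ) ^ 4 * t ^ 2 * R ^ 6 + (35) * (cos φ) ^ 4 * t ^ 4 * R ^ 6 + (9448) * (cos φ) ^ 4 * t ^ 6 * R ^ 6 + (990) * (cos φ) ^ 4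 * t ^ 8 * R ^ 6 - (48604) * (cos φ) ^ 4 * t ^ 10 * R ^ 6 + (990) * (cos φ) ^ 4 * t ^ 12 * R ^ 6 + (9448) * (cos φ) ^ 4 * t ^ 14 * R ^ 6 + (35) * (cos φ) ^ 4 * t ^ 16 * R ^ 6 + (6) * (cos φ) ^ 4 * t ^ 18 * R ^ 6 - (1) * (cos φ) ^ 4 * t ^ 20 * R ^ 6 + (992) * (cos φ) ^ 6 * t ^ 4 * R ^ 6 - (41024) * (cos φ) ^ 6 * t ^ 6 * R ^ 6 + (58912) * (cos φ) ^ 6 * t ^ 8 * R ^ 6 + (157824) * (cos φ) ^ 6 * t ^ 10 * R ^ 6 + (58912) * (cos φ) ^ 6 * t ^ 12 * R ^ 6 - (41024) * (cos φ) ^ 6 * t ^ 14 * R ^ 6 + (992) * (cos φ) ^ 6 * t ^ 16 * R ^ 6 + (48) * (cos φ) ^ 8 * t ^ 2 * R ^ 6 - (3712) * (cos φ) ^ 8 * t ^ 4 * R ^ 6 + (94720) * (cos φ) ^ 8 * t ^ 6 * R ^ 6 - (227712) * (cos φ) ^ 8 * t ^ 8 * R ^ 6 - (361568) * (cos φ)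 ^ 8 * t ^ 10 * R ^ 6 - (227712) * (cos φ) ^ 8 * t ^ 12 * R ^ 6 + (94720) * (cos φ) ^ 8 * t ^ 14 * R ^ 6 - (3712) * (cos φ) ^ 8 * t ^ 16 * R ^ 6 + (48) * (cos φ) ^ 8 * t ^ 18 * R ^ 6 + (3008) * (cos φ) ^ 10 * t ^ 4 * R ^ 6 - (100224) * (cos φ) ^ 10 * t ^ 6 * R ^ 6 + (310336) * (cos φ) ^ 10 * t ^ 8 * R ^ 6 + (651008) * (cos φ) ^ 10 * t ^ 10 * R ^ 6 + (310336) * (cos φ) ^ 10 * t ^ 12 * R ^ 6 - (100224) * (cos φ) ^ 10 * t ^ 14 * R ^ 6 + (3008) * (cos φ) ^ 10 * t ^ 16 * R ^ 6 + (34816) * (cos φ) ^ 12 * t ^ 6 * R ^ 6 - (106496) * (cos φ) ^ 12 * t ^ 8 * R ^ 6 - (790528) * (cos φ) ^ 12 * t ^ 10 * R ^ 6 - (106496) * (cos φ) ^ 12 * t ^ 12 * R ^ 6 + (34816) * (cos φ) ^ 12 * t ^ 14 * R ^ 6 + (4096) * (cos φ) ^ 14 * t ^ 6 * R ^ 6 -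 (98304) * (cos φ) ^ 14 * t ^ 8 * R ^ 6 + (516096) * (cos φ) ^ 14 * t ^ 10 * R ^ 6 - (98304) * (cos φ) ^ 14 * t ^ 12 * R ^ 6 + (4096) * (cos φ) ^ 14 * t ^ 14 * R ^ 6 + (65536) * (cos φ) ^ 16 * t ^ 8 * R ^ 6 - (131072) * (cos φ) ^ 16 * t ^ 10 * R ^ 6 + (65536) * (cos φ) ^ 16 * t ^ 12 * R ^ 6 - (4) * (sin φ) ^ 2 * t ^ 2 * R ^ 6 - (16) * (sin φ) ^ 2 * t ^ 4 * R ^ 6 + (48) * (sin φ) ^ 2 * t ^ 6 * R ^ 6 + (16) * (sin φ) ^ 2 * t ^ 8 * R ^ 6 - (88) * (sin φ) ^ 2 * t ^ 10 * R ^ 6 + (16) * (sin φ) ^ 2 * t ^ 12 * R ^ 6 + (48) * (sin φ) ^ 2 * t ^ 14 * R ^ 6 - (16) * (sin φ) ^ 2 * t ^ 16 * R ^ 6 - (4) * (sin φ) ^ 2 * t ^ 18 * R ^ 6 - (2) * (sin φ) ^ 2 * (cos φ) ^ 2 * R ^ 6 - (4) * (sin φ) ^ 2 * (cos φ) ^ 2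 * t ^ 2 * R ^ 6 + (70) * (sin φ) ^ 2 * (cos φ) ^ 2 * t ^ 4 * R ^ 6 + (4048) * (sin φ) ^ 2 * (cos φ) ^ 2 * t ^ 6 * R ^ 6 + (23484) * (sin φ) ^ 2 * (cos φ) ^ 2 * t ^ 8 * R ^ 6 + (39016) * (sin φ) ^ 2 * (cos φ) ^ 2 * t ^ 10 * R ^ 6 + (23484) * (sin φ) ^ 2 * (cos φ) ^ 2 * t ^ 12 * R ^ 6 + (4048) * (sin φ) ^ 2 * (cos φ) ^ 2 * t ^ 14 * R ^ 6 + (70) * (sin φ) ^ 2 * (cos φ) ^ 2 * t ^ 16 * R ^ 6 - (4) * (sin φ) ^ 2 * (cos φ) ^ 2 * t ^ 18 * R ^ 6 - (2) * (sin φ) ^ 2 * (cos φ) ^ 2 * t ^ 20 * R ^ 6 - (48) * (sin φ) ^ 2 * (cos φ) ^ 4 * t ^ 2 * R ^ 6 + (720) * (sin φ) ^ 2 * (cos φ) ^ 4 * t ^ 4 * R ^ 6 - (28320) * (sin φ) ^ 2 * (cos φ) ^ 4 * t ^ 6 * R ^ 6 - (204240) * (sin φ) ^ 2 * (cos φ)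 ^ 4 * t ^ 8 * R ^ 6 - (350304) * (sin φ) ^ 2 * (cos φ) ^ 4 * t ^ 10 * R ^ 6 - (204240) * (sin φ) ^ 2 * (cos φ) ^ 4 * t ^ 12 * R ^ 6 - (28320) * (sin φ) ^ 2 * (cos φ) ^ 4 * t ^ 14 * R ^ 6 + (720) * (sin φ) ^ 2 * (cos φ) ^ 4 * t ^ 16 * R ^ 6 - (48) * (sin φ) ^ 2 * (cos φ) ^ 4 * t ^ 18 * R ^ 6 + (96) * (sin φ) ^ 2 * (cos φ) ^ 6 * t ^ 2 * R ^ 6 - (3328) * (sin φ) ^ 2 * (cos φ) ^ 6 * t ^ 4 * R ^ 6 + (73024) * (sin φ) ^ 2 * (cos φ) ^ 6 * t ^ 6 * R ^ 6 + (742656) * (sin φ) ^ 2 * (cos φ) ^ 6 * t ^ 8 * R ^ 6 + (1332416) * (sin φ) ^ 2 * (cos φ) ^ 6 * t ^ 10 * R ^ 6 + (742656) * (sin φ) ^ 2 * (cos φ) ^ 6 * t ^ 12 * R ^ 6 + (73024) * (sin φ) ^ 2 * (cos φ) ^ 6 * t ^ 14 * R ^ 6 - (3328) * (sin φ) ^ 2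 * (cos φ) ^ 6 * t ^ 16 * R ^ 6 + (96) * (sin φ) ^ 2 * (cos φ) ^ 6 * t ^ 18 * R ^ 6 + (2944) * (sin φ) ^ 2 * (cos φ) ^ 8 * t ^ 4 * R ^ 6 - (82176) * (sin φ) ^ 2 * (cos φ) ^ 8 * t ^ 6 * R ^ 6 - (1447808) * (sin φ) ^ 2 * (cos φ) ^ 8 * t ^ 8 * R ^ 6 - (2725376) * (sin φ) ^ 2 * (cos φ) ^ 8 * t ^ 10 * R ^ 6 - (1447808) * (sin φ) ^ 2 * (cos φ) ^ 8 * t ^ 12 * R ^ 6 - (82176) * (sin φ) ^ 2 * (cos φ) ^ 8 * t ^ 14 * R ^ 6 + (2944) * (sin φ) ^ 2 * (cos φ) ^ 8 * t ^ 16 * R ^ 6 + (30720) * (sin φ) ^ 2 * (cos φ) ^ 10 * t ^ 6 * R ^ 6 + (1609728) * (sin φ) ^ 2 * (cos φ) ^ 10 * t ^ 8 * R ^ 6 + (3158016) * (sin φ) ^ 2 * (cos φ) ^ 10 * t ^ 10 * R ^ 6 + (1609728) * (sin φ) ^ 2 * (cos φ) ^ 10 * t ^ 12 * R ^ 6 +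 (30720) * (sin φ) ^ 2 * (cos φ) ^ 10 * t ^ 14 * R ^ 6 + (4096) * (sin φ) ^ 2 * (cos φ) ^ 12 * t ^ 6 * R ^ 6 - (983040) * (sin φ) ^ 2 * (cos φ) ^ 12 * t ^ 8 * R ^ 6 - (1974272) * (sin φ) ^ 2 * (cos φ) ^ 12 * t ^ 10 * R ^ 6 - (983040) * (sin φ) ^ 2 * (cos φ) ^ 12 * t ^ 12 * R ^ 6 + (4096) * (sin φ) ^ 2 * (cos φ) ^ 12 * t ^ 14 * R ^ 6 + (262144) * (sin φ) ^ 2 * (cos φ) ^ 14 * t ^ 8 * R ^ 6 + (524288) * (sin φ) ^ 2 * (cos φ) ^ 14 * t ^ 10 * R ^ 6 + (262144) * (sin φ) ^ 2 * (cos φ) ^ 14 * t ^ 12 * R ^ 6 - (1) * (sin φ) ^ 4 * R ^ 6 - (10) * (sin φ) ^ 4 * t ^ 2 * R ^ 6 - (29) * (sin φ) ^ 4 * t ^ 4 * R ^ 6 - (24) * (sin φ) ^ 4 * t ^ 6 * R ^ 6 + (30) * (sin φ) ^ 4 * t ^ 8 * R ^ 6 + (68) * (sin φ) ^ 4 * t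 ^ 10 * R ^ 6 + (30) * (sin φ) ^ 4 * t ^ 12 * R ^ 6 - (24) * (sin φ) ^ 4 * t ^ 14 * R ^ 6 - (29) * (sin φ) ^ 4 * t ^ 16 * R ^ 6 - (10) * (sin φ) ^ 4 * t ^ 18 * R ^ 6 - (1) * (sin φ) ^ 4 * t ^ 20 * R ^ 6 - (48) * (sin φ) ^ 4 * (cos φ) ^ 2 * t ^ 2 * R ^ 6 - (336) * (sin φ) ^ 4 * (cos φ) ^ 2 * t ^ 4 * R ^ 6 - (1056) * (sin φ) ^ 4 * (cos φ) ^ 2 * t ^ 6 * R ^ 6 - (1968) * (sin φ) ^ 4 * (cos φ) ^ 2 * t ^ 8 * R ^ 6 - (2400) * (sin φ) ^ 4 * (cos φ) ^ 2 * t ^ 10 * R ^ 6 - (1968) * (sin φ) ^ 4 * (cos φ) ^ 2 * t ^ 12 * R ^ 6 - (1056) * (sin φ) ^ 4 * (cos φ) ^ 2 * t ^ 14 * R ^ 6 - (336) * (sin φ) ^ 4 * (cos φ) ^ 2 * t ^ 16 * R ^ 6 - (48) * (sin φ) ^ 4 * (cos φ) ^ 2 * t ^ 18 * R ^ 6 +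 (48) * (sin φ) ^ 4 * (cos φ) ^ 4 * t ^ 2 * R ^ 6 + (384) * (sin φ) ^ 4 * (cos φ) ^ 4 * t ^ 4 * R ^ 6 + (1344) * (sin φ) ^ 4 * (cos φ) ^ 4 * t ^ 6 * R ^ 6 + (2688) * (sin φ) ^ 4 * (cos φ) ^ 4 * t ^ 8 * R ^ 6 + (3360) * (sin φ) ^ 4 * (cos φ) ^ 4 * t ^ 10 * R ^ 6 + (2688) * (sin φ) ^ 4 * (cos φ) ^ 4 * t ^ 12 * R ^ 6 + (1344) * (sin φ) ^ 4 * (cos φ) ^ 4 * t ^ 14 * R ^ 6 + (384) * (sin φ) ^ 4 * (cos φ) ^ 4 * t ^ 16 * R ^ 6 + (48) * (sin φ) ^ 4 * (cos φ) ^ 4 * t ^ 18 * R ^ 6 - (64) * (sin φ) ^ 4 * (cos φ) ^ 6 * t ^ 4 * R ^ 6 - (384) * (sin φ) ^ 4 * (cos φ) ^ 6 * t ^ 6 * R ^ 6 - (960) * (sin φ) ^ 4 * (cos φ) ^ 6 * t ^ 8 * R ^ 6 - (1280) * (sin φ) ^ 4 * (cos φ) ^ 6 * t ^ 10 * R ^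 6 - (960) * (sin φ) ^ 4 * (cos φ) ^ 6 * t ^ 12 * R ^ 6 - (384) * (sin φ) ^ 4 * (cos φ) ^ 6 * t ^ 14 * R ^ 6 - (64) * (sin φ) ^ 4 * (cos φ) ^ 6 * t ^ 16 * R ^ 6) * hc
end
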